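/- For an alphabet X = {x_1,...,x_n} and a nonnegative integer i, define Q̃_{i,i}(X) = Q̃_i(X)² + 2∑_{p=1}^{i}(-1)^p Q̃_{i+p}(X) Q̃_{i-p}(X), where Q̃_j(X) = e_j(X) is the j-th elementary symmetric polynomial (with e_j = 0 for j > n). Then Q̃_{i,i}(X) = e_i(X²), the i-th elementary symmetric polynomial in the squares x_1², ..., x_n². -/

import Mathlib

open Finset

open Polynomial

lemma esymm_zero' {R : Type*} [CommRing R] (s : Multiset R) : s.esymm 0 = 1 := by
  simp [Multiset.esymm]

lemma esymm_nil {R : Type*} [CommRing R] (k : ℕ) : (0 : Multiset R).esymm (k+1) = 0 := by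
  simp [Multiset.esymm, Multiset.powersetCard_zero_right]

lemma esymm_cons {R : Type*} [CommRing R] (a : R) (s : Multiset R) (k : ℕ) :
    (a ::ₘ s).esymm (k+1) = s.esymm (k+1) + a * s.esymm k := by
  simp [Multiset.esymm, Multiset.powersetCard_cons, Multiset.map_map, Function.comp,
    Multiset.sum_map_mul_left]

lemma coeff_G {R : Type*} [CommRing R] (s : Multiset R) (k : ℕ) :
    ((s.map fun r => 1 + C r * X).prod).coeff k = s.esymm k := by
  induction s using Multiset.induction generalizing k with
  | empty =>
    cases k with
    | zero => simp [esymm_zero']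
    | succ k => simp [esymm_nil, coeff_one]
  | cons a s ih =>
    rw [Multiset.map_cons, Multiset.prod_cons, add_mul, one_mul, coeff_add, mul_assoc,
      coeff_C_mul]
    cases k with
    | zero => simp [ih, esymm_zero']
    | succ k => rw [coeff_X_mul, ih, ih, esymm_cons]

lemma prod_eq_expand {R : Type*} [CommRing R] (s : Multiset R) :
    ((s.map fun r => 1 + C r * X).prod) * (((s.map Neg.neg).map fun r => 1 + C r * X).prod)
      = Polynomial.expand R 2 ((((s.map fun x => x ^ 2).map Neg.neg).map fun r => 1 + C r * X).prod) := by
  rw [Multiset.map_map, Multiset.map_map, Multiset.map_map, ← Multiset.prod_map_mul,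
    map_multiset_prod, Multiset.map_map]
  refine congrArg _ (Multiset.map_congr rfl fun x _ => ?_)
  simp only [Function.comp_apply, map_add, map_one, map_mul, map_neg, map_pow, expand_C, expand_X]
  ring

lemma key {R : Type*} [CommRing R] (s : Multiset R) (i : ℕ) :
    ∑ k ∈ range (2 * i + 1), s.esymm k * ((-1 : R) ^ (2 * i - k) * s.esymm (2 * i - k))
      = (-1) ^ i * (s.map fun x => x ^ 2).esymm i := by
  have h1 := congrArg (fun p => Polynomial.coeff p (2 * i)) (prod_eq_expand s)
  simp only [coeff_mul, Finset.Nat.sum_antidiagonal_eq_sum_range_succ_mk] at h1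
  rw [coeff_expand (by norm_num)] at h1
  simp only [Nat.mul_div_cancel_left _ (by norm_num : 0 < 2), dvd_mul_right, if_pos] at h1
  rw [coeff_G] at h1
  calc ∑ k ∈ range (2 * i + 1), s.esymm k * ((-1 : R) ^ (2 * i - k) * s.esymm (2 * i - k))
      = ∑ k ∈ range (2 * i + 1),
          ((s.map fun r => 1 + C r * X).prod).coeff k *
          (((s.map Neg.neg).map fun r => 1 + C r * X).prod).coeff (2 * i - k) := by
        refine Finset.sum_congr rfl fun k _ => ?_
        rw [coeff_G, coeff_G, Multiset.esymm_neg]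
    _ = (-1) ^ i * (s.map fun x => x ^ 2).esymm i := by
        rw [h1, Multiset.esymm_neg]

lemma sum_eq {R : Type*} [CommRing R] (s : Multiset R) (i : ℕ) :
    ∑ k ∈ range (2 * i + 1), s.esymm k * ((-1 : R) ^ (2 * i - k) * s.esymm (2 * i - k))
      = (-1 : R) ^ i * (s.esymm i * s.esymm i +
          2 * ∑ p ∈ Finset.Icc 1 i, (-1 : R) ^ p * s.esymm (i + p) * s.esymm (i - p)) := by
  set f : ℕ → R := fun k => s.esymm k * ((-1 : R) ^ (2 * i - k) * s.esymm (2 * i - k)) with hf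
  set g : ℕ → R := fun k => (-1 : R) ^ (1 + k) * s.esymm (i + (1 + k)) * s.esymm (i - (1 + k))
    with hg
  have hsplit : ∑ k ∈ range (2 * i + 1), f k
      = (∑ k ∈ range i, f (i - 1 - k)) + f i + ∑ k ∈ range i, f (i + 1 + k) := by
    rw [range_eq_Ico, ← Finset.sum_Ico_consecutive f (Nat.zero_le (i+1))
      (show i + 1 ≤ 2 * i + 1 by omega), ← range_eq_Ico, Finset.sum_range_succ,
      Finset.sum_Ico_eq_sum_range]
    congr 1
    · congr 1
      exact (Finset.sum_range_reflect f i).symm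
    · apply Finset.sum_congr (by first | rfl | (congr 1; omega)) fun k _ => by first | rfl | (congr 1; omega)
  have hIcc : ∑ p ∈ Finset.Icc 1 i, (-1 : R) ^ p * s.esymm (i + p) * s.esymm (i - p)
      = ∑ k ∈ range i, g k := by
    rw [← Finset.Ico_add_one_right_eq_Icc, Finset.sum_Ico_eq_sum_range]
    apply Finset.sum_congr (by first | rfl | (congr 1; omega)) fun k _ => rfl
  have hfi : f i = (-1 : R) ^ i * (s.esymm i * s.esymm i) := by
    rw [hf]; simp only [show 2 * i - i = i by omega]; ring
  have hpair : ∀ k ∈ range i, f (i - 1 - k) + f (i + 1 + k) = (-1 : R) ^ i * (2 * g k) := by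
    intro k hk
    have hki : k < i := Finset.mem_range.mp hk
    have h5 : ((-1 : R)) ^ (i + 1 + k) = (-1 : R) ^ (i - 1 - k) := by
      rw [show i + 1 + k = (i - 1 - k) + 2 * (k + 1) from by omega, pow_add, pow_mul]
      norm_num
    have h6 : ((-1 : R)) ^ i * (-1 : R) ^ (1 + k) = (-1 : R) ^ (i + 1 + k) := by
      rw [← pow_add]; congr 1; omega
    have h7 : ((-1 : R)) ^ (i - 1 - k) = (-1 : R) ^ i * (-1 : R) ^ (1 + k) :=
      (h6.trans h5).symm
    rw [hf, hg]
    simp only [show 2 * i - (i - 1 - k) = i + 1 + k from by omega,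
      show 2 * i - (i + 1 + k) = i - 1 - k from by omega,
      show i - (1 + k) = i - 1 - k from by omega,
      show i + (1 + k) = i + 1 + k from by omega]
    rw [h5, h7]
    ring
  calc ∑ k ∈ range (2 * i + 1), f k
      = f i + ∑ k ∈ range i, (f (i - 1 - k) + f (i + 1 + k)) := by
        rw [hsplit, Finset.sum_add_distrib]; ring
    _ = (-1 : R) ^ i * (s.esymm i * s.esymm i) + ∑ k ∈ range i, (-1 : R) ^ i * (2 * g k) := by
        rw [hfi, Finset.sum_congr rfl hpair]
    _ = (-1 : R) ^ i * (s.esymm i * s.esymm i + 2 * ∑ k ∈ range i, g k) := by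
        rw [← Finset.mul_sum, ← mul_add, ← Finset.mul_sum]
    _ = _ := by rw [hIcc]

/-- `Qtilde s i j = e_i(s) e_j(s) + 2 ∑_{p=1}^{j} (-1)^p e_{i+p}(s) e_{j-p}(s)`. -/
def Qtilde {R : Type*} [CommRing R] (s : Multiset R) (i j : ℕ) : R :=
  s.esymm i * s.esymm j +
    2 * ∑ p ∈ Finset.Icc 1 j, (-1 : R) ^ p * s.esymm (i + p) * s.esymm (j - p)

theorem Qtilde_diag_eq_esymm_squares {R : Type*} [CommRing R] (s : Multiset R) (i : ℕ) :
    Qtilde s i i = (s.map fun x => x ^ 2).esymm i := by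
  have h := (sum_eq s i).symm.trans (key s i)
  have hsq : ((-1 : R) ^ i) * ((-1 : R) ^ i) = 1 := by
    rw [← pow_add, ← two_mul, pow_mul]; norm_num
  calc Qtilde s i i = ((-1 : R) ^ i * (-1 : R) ^ i) * Qtilde s i i := by rw [hsq, one_mul]
    _ = (-1 : R) ^ i * ((-1 : R) ^ i * Qtilde s i i) := by ring
    _ = (-1 : R) ^ i * ((-1 : R) ^ i * (s.map fun x => x ^ 2).esymm i) := by
        rw [show (-1 : R) ^ i * Qtilde s i i = _ from h]
    _ = (s.map fun x => x ^ 2).esymm i := by rw [← mul_assoc, hsq, one_mul]
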